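/- If A is an irreducible real n×n matrix with nonnegative off-diagonal entries, then there exists a strictly positive vector v (all components > 0) with A v = s(A) v. -/

import Mathlib

open Matrix Finset

/-- A matrix is irreducible if there is no nontrivial subset `S` of indices with
`A i j = 0` for all `i ∈ S`, `j ∉ S`. -/
def MatIrreducible {n : ℕ} (A : Matrix (Fin n) (Fin n) ℝ) : Prop :=
  ¬ ∃ S : Set (Fin n), S.Nonempty ∧ Sᶜ.Nonempty ∧ ∀ i ∈ S, ∀ j ∉ S, A i j = 0

namespace PFaux

variable {n : ℕ}

lemma irr_congr {A B : Matrix (Fin n) (Fin n) ℝ} (h : ∀ i j, i ≠ j → A i j = B i j)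
    (hA : MatIrreducible A) : MatIrreducible B := by
  rintro ⟨S, hS, hSc, h0⟩
  refine hA ⟨S, hS, hSc, fun i hi j hj => ?_⟩
  have hij : i ≠ j := fun he => hj (he ▸ hi)
  rw [h i j hij]; exact h0 i hi j hj

lemma mulVec_nonneg {B : Matrix (Fin n) (Fin n) ℝ} (hB : ∀ i j, 0 ≤ B i j)
    {u : Fin n → ℝ} (hu : ∀ i, 0 ≤ u i) : ∀ i, 0 ≤ (B *ᵥ u) i := by
  intro i
  show 0 ≤ ∑ j, B i j * u j
  exact Finset.sum_nonneg fun j _ => mul_nonneg (hB i j) (hu j)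

/-- support set -/
noncomputable def T (v : Fin n → ℝ) : Finset (Fin n) :=
  {i | 0 < v i}

lemma mem_T {v : Fin n → ℝ} {i : Fin n} : i ∈ T v ↔ 0 < v i := by
  simp [T]

lemma one_add_apply (B : Matrix (Fin n) (Fin n) ℝ) (v : Fin n → ℝ) (i : Fin n) :
    ((1 + B) *ᵥ v) i = v i + (B *ᵥ v) i := by
  rw [add_mulVec, one_mulVec]; rfl

lemma T_subset {B : Matrix (Fin n) (Fin n) ℝ} (hB : ∀ i j, 0 ≤ B i j)
    {v : Fin n → ℝ} (hv : ∀ i, 0 ≤ v i) : T v ⊆ T ((1 + B) *ᵥ v) := by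
  intro i hi
  rw [mem_T] at hi ⊢
  rw [one_add_apply]
  exact lt_add_of_lt_of_nonneg hi (mulVec_nonneg hB hv i)

lemma T_ssubset {B : Matrix (Fin n) (Fin n) ℝ} (hB : ∀ i j, 0 ≤ B i j)
    (hirr : MatIrreducible B) {v : Fin n → ℝ} (hv : ∀ i, 0 ≤ v i)
    (h1 : (T v).Nonempty) (h2 : T v ≠ univ) : T v ⊂ T ((1 + B) *ᵥ v) := by
  refine (Finset.ssubset_iff_of_subset (T_subset hB hv)).2 ?_
  by_contra hcon
  push_neg at hcon
  refine hirr ⟨{i | ¬ 0 < v i}, ?_, ?_, ?_⟩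
  · have := Finset.eq_univ_iff_forall.not.1 h2
    push_neg at this
    obtain ⟨i, hi⟩ := this
    exact ⟨i, by simpa [mem_T] using hi⟩
  · obtain ⟨i, hi⟩ := h1
    exact ⟨i, by simpa [mem_T] using (mem_T.1 hi)⟩
  · intro i hi j hj
    simp only [Set.mem_setOf_eq, not_not] at hi hj
    -- i : ¬ 0 < v i, j : 0 < v j
    have hiT : i ∉ T v := by simpa [mem_T] using hi
    have hMi : ¬ 0 < ((1 + B) *ᵥ v) i := fun h => hiT (hcon _ (mem_T.2 h))
    have hvi : v i = 0 := le_antisymm (not_lt.1 hi) (hv i)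
    have hBv : (B *ᵥ v) i = 0 := by
      have h1' : 0 ≤ (B *ᵥ v) i := mulVec_nonneg hB hv i
      have h2' : ((1 + B) *ᵥ v) i ≤ 0 := not_lt.1 hMi
      rw [one_add_apply, hvi, zero_add] at h2'
      linarith
    have hBv' : ∑ k, B i k * v k = 0 := hBv
    have := (Finset.sum_eq_zero_iff_of_nonneg
      (fun k _ => mul_nonneg (hB i k) (hv k))).1 hBv' j (mem_univ j)
    rcases mul_eq_zero.1 this with h | h
    · exact h
    · exact absurd h (ne_of_gt hj)

lemma iter_nonneg {B : Matrix (Fin n) (Fin n) ℝ} (hB : ∀ i j, 0 ≤ B i j)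
    {u : Fin n → ℝ} (hu : ∀ i, 0 ≤ u i) (k : ℕ) : ∀ i, 0 ≤ (((1 + B) ^ k) *ᵥ u) i := by
  induction k with
  | zero => simpa using hu
  | succ k ih =>
      intro i
      rw [pow_succ', ← Matrix.mulVec_mulVec, one_add_apply]
      exact add_nonneg (ih i) (mulVec_nonneg hB ih i)

lemma key_pos (hn : 0 < n) {B : Matrix (Fin n) (Fin n) ℝ} (hB : ∀ i j, 0 ≤ B i j)
    (hirr : MatIrreducible B) {u : Fin n → ℝ} (hu : ∀ i, 0 ≤ u i) (hu0 : u ≠ 0) :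
    ∀ i, 0 < (((1 + B) ^ (n - 1)) *ᵥ u) i := by
  have card_ge : ∀ k, min n (k + 1) ≤ (T (((1 + B) ^ k) *ᵥ u)).card := by
    intro k
    induction k with
    | zero =>
        have : (T (((1 + B) ^ 0) *ᵥ u)).Nonempty := by
          obtain ⟨i, hi⟩ := Function.ne_iff.1 hu0
          exact ⟨i, by simp [mem_T, lt_of_le_of_ne (hu i) (Ne.symm hi)]⟩
        have := Finset.card_pos.2 this
        omega
    | succ k ih =>
        have hnn := iter_nonneg hB hu k
        have hsub := T_subset hB hnn
        rw [pow_succ', ← Matrix.mulVec_mulVec]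
        by_cases hU : T (((1 + B) ^ k) *ᵥ u) = univ
        · have : (univ : Finset (Fin n)) ⊆ T ((1 + B) *ᵥ ((1 + B) ^ k) *ᵥ u) := hU ▸ hsub
          have := Finset.card_le_card this
          simp only [Finset.card_univ, Fintype.card_fin] at this
          omega
        · have hne : (T (((1 + B) ^ k) *ᵥ u)).Nonempty := by
            refine Finset.card_pos.1 ?_
            omega
          have := Finset.card_lt_card (T_ssubset hB hirr hnn hne hU)
          omega
  have := card_ge (n - 1)
  have hmin : min n (n - 1 + 1) = n := by omega
  rw [hmin] at this
  have hall : T (((1 + B) ^ (n - 1)) *ᵥ u) = univ := by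
    apply Finset.eq_univ_of_card
    have := Finset.card_le_card (Finset.subset_univ (T (((1 + B) ^ (n - 1)) *ᵥ u)))
    simp only [Finset.card_univ, Fintype.card_fin] at *
    omega
  intro i
  have : i ∈ T (((1 + B) ^ (n - 1)) *ᵥ u) := hall ▸ mem_univ i
  exact mem_T.1 this

end PFaux

namespace Part2
variable {n : ℕ}

lemma cont_mulVec (M : Matrix (Fin n) (Fin n) ℝ) (i : Fin n) :
    Continuous (fun u : Fin n → ℝ => (M *ᵥ u) i) := by
  show Continuous fun u : Fin n → ℝ => ∑ j, M i j * u j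
  exact continuous_finset_sum _ fun j _ => continuous_const.mul (continuous_apply j)

lemma PF_exists (hn : 0 < n) {B : Matrix (Fin n) (Fin n) ℝ} (hB : ∀ i j, 0 ≤ B i j)
    (hirr : MatIrreducible B) :
    ∃ (r : ℝ) (w : Fin n → ℝ), (∀ i, 0 < w i) ∧ B *ᵥ w = r • w := by
  haveI : NeZero n := ⟨hn.ne'⟩
  set C : Matrix (Fin n) (Fin n) ℝ := (1 + B) ^ (n - 1) with hC
  set Tmax : ℝ := ∑ i, ∑ j, B i j with hTmax
  have hTmax0 : 0 ≤ Tmax := Finset.sum_nonneg fun i _ =>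
    Finset.sum_nonneg fun j _ => hB i j
  set Δ : Set (Fin n → ℝ) := {u | (∀ i, 0 ≤ u i) ∧ ∑ i, u i = 1} with hΔ
  have hΔclosed : IsClosed Δ := by
    have h1 : IsClosed {u : Fin n → ℝ | ∀ i, 0 ≤ u i} := by
      rw [Set.setOf_forall]
      exact isClosed_iInter fun i => isClosed_le continuous_const (continuous_apply i)
    have h2 : IsClosed {u : Fin n → ℝ | ∑ i, u i = 1} :=
      isClosed_eq (continuous_finset_sum _ fun i _ => continuous_apply i) continuous_const
    exact h1.inter h2
  have hΔcompact : IsCompact Δ := by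
    apply Metric.isCompact_of_isClosed_isBounded hΔclosed
    rw [isBounded_iff_forall_norm_le]
    refine ⟨1, fun u hu => ?_⟩
    rw [pi_norm_le_iff_of_nonneg zero_le_one]
    intro i
    rw [Real.norm_eq_abs, abs_of_nonneg (hu.1 i)]
    calc u i ≤ ∑ j, u j := Finset.single_le_sum (fun j _ => hu.1 j) (Finset.mem_univ i)
    _ = 1 := hu.2
  -- the feasible set
  set E : Set ((Fin n → ℝ) × ℝ) :=
    (Δ ×ˢ Set.Icc 0 Tmax) ∩ ⋂ i, {p | p.2 * (C *ᵥ p.1) i ≤ (B *ᵥ (C *ᵥ p.1)) i} with hE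
  have hEclosed : IsClosed E := by
    refine (hΔclosed.prod isClosed_Icc).inter (isClosed_iInter fun i => ?_)
    have heq : (fun p : (Fin n → ℝ) × ℝ => (B *ᵥ (C *ᵥ p.1)) i)
        = fun p => ((B * C) *ᵥ p.1) i := by
      funext p
      rw [Matrix.mulVec_mulVec]
    refine isClosed_le (continuous_snd.mul ((cont_mulVec C i).comp continuous_fst)) ?_
    show Continuous fun p : (Fin n → ℝ) × ℝ => (B *ᵥ (C *ᵥ p.1)) i
    rw [heq]
    exact (cont_mulVec (B * C) i).comp continuous_fst
  have hEcompact : IsCompact E :=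
    ((hΔcompact.prod isCompact_Icc)).of_isClosed_subset hEclosed Set.inter_subset_left
  have hu0Δ : (fun _ : Fin n => (n : ℝ)⁻¹) ∈ Δ := by
    constructor
    · intro i
      positivity
    · rw [Finset.sum_const, Finset.card_univ, Fintype.card_fin, nsmul_eq_mul,
        mul_inv_cancel₀ (Nat.cast_ne_zero.2 hn.ne')]
  have hEne : E.Nonempty := by
    refine ⟨(fun _ => (n : ℝ)⁻¹, 0), ⟨hu0Δ, Set.left_mem_Icc.2 hTmax0⟩, ?_⟩
    simp only [Set.mem_iInter, Set.mem_setOf_eq, zero_mul]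
    intro i
    exact PFaux.mulVec_nonneg hB (PFaux.iter_nonneg hB (fun j => hu0Δ.1 j) (n-1)) i
  obtain ⟨p₀, hp₀, hmax⟩ := hEcompact.exists_isMaxOn hEne continuous_snd.continuousOn
  obtain ⟨⟨hu₀Δ, hrIcc⟩, hfeas⟩ := hp₀
  set u₀ := p₀.1
  set r := p₀.2
  simp only [Set.mem_iInter, Set.mem_setOf_eq] at hfeas
  have hu₀ne : u₀ ≠ 0 := by
    intro h
    have := hu₀Δ.2
    rw [h] at this
    simp at this
  set w : Fin n → ℝ := C *ᵥ u₀ with hw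
  have hwpos : ∀ i, 0 < w i := PFaux.key_pos hn hB hirr hu₀Δ.1 hu₀ne
  -- show B w = r w
  refine ⟨r, w, hwpos, ?_⟩
  by_contra hne
  set z : Fin n → ℝ := B *ᵥ w - r • w with hz
  have hz0 : ∀ i, 0 ≤ z i := fun i => by
    simpa [hz, sub_nonneg] using hfeas i
  have hzne : z ≠ 0 := fun h => hne (by rwa [sub_eq_zero] at h)
  have hCz : ∀ i, 0 < (C *ᵥ z) i := PFaux.key_pos hn hB hirr hz0 hzne
  set w' : Fin n → ℝ := C *ᵥ w with hw'
  have hw'pos : ∀ i, 0 < w' i :=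
    PFaux.key_pos hn hB hirr (fun i => (hwpos i).le) (fun h => (hwpos 0).ne' (congrFun h 0))
  have hcomm : C * B = B * C := by
    have : Commute (1 + B) B := (Commute.one_left B).add_left (Commute.refl B)
    exact (this.pow_left (n - 1))
  have hkey : ∀ i, (C *ᵥ z) i = (B *ᵥ w') i - r * w' i := by
    intro i
    have h1 : C *ᵥ (B *ᵥ w) = B *ᵥ w' := by
      rw [Matrix.mulVec_mulVec, hcomm, ← Matrix.mulVec_mulVec, hw']
    have h2 : C *ᵥ (r • w) = r • w' := by
      rw [Matrix.mulVec_smul, hw']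
    have : C *ᵥ z = B *ᵥ w' - r • w' := by
      rw [hz, Matrix.mulVec_sub, h1, h2]
    rw [this]
    simp
  set ε : ℝ := Finset.univ.inf' Finset.univ_nonempty (fun i => (C *ᵥ z) i / w' i) with hε
  have hεpos : 0 < ε := by
    rw [hε, Finset.lt_inf'_iff]
    exact fun i _ => div_pos (hCz i) (hw'pos i)
  have hstep : ∀ i, (r + ε) * w' i ≤ (B *ᵥ w') i := by
    intro i
    have h1 : ε ≤ (C *ᵥ z) i / w' i := Finset.inf'_le _ (Finset.mem_univ i)
    have h2 : ε * w' i ≤ (C *ᵥ z) i := (le_div_iff₀ (hw'pos i)).1 h1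
    have := hkey i
    nlinarith [hw'pos i]
  -- bound r + ε ≤ Tmax
  obtain ⟨i₀, _, hi₀⟩ := Finset.exists_max_image Finset.univ w' Finset.univ_nonempty
  have hbound : r + ε ≤ Tmax := by
    have h1 : (r + ε) * w' i₀ ≤ (B *ᵥ w') i₀ := hstep i₀
    have h2 : (B *ᵥ w') i₀ ≤ (∑ j, B i₀ j) * w' i₀ := by
      show ∑ j, B i₀ j * w' j ≤ _
      rw [Finset.sum_mul]
      exact Finset.sum_le_sum fun j _ =>
        mul_le_mul_of_nonneg_left (hi₀ j (Finset.mem_univ j)) (hB i₀ j)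
    have h3 : (∑ j, B i₀ j) ≤ Tmax :=
      Finset.single_le_sum (fun i _ => Finset.sum_nonneg fun j _ => hB i j) (Finset.mem_univ i₀)
    have h4 : (r + ε) ≤ ∑ j, B i₀ j := by
      have := h1.trans h2
      exact le_of_mul_le_mul_right this (hw'pos i₀)
    linarith
  -- construct new feasible point
  set σ : ℝ := ∑ i, w i with hσ
  have hσpos : 0 < σ := Finset.sum_pos (fun i _ => hwpos i) Finset.univ_nonempty
  set u' : Fin n → ℝ := σ⁻¹ • w with hu'
  have hu'Δ : u' ∈ Δ := by
    constructor
    · intro i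
      exact mul_nonneg (inv_nonneg.2 hσpos.le) (hwpos i).le
    · show ∑ i, σ⁻¹ * w i = 1
      rw [← Finset.mul_sum, ← hσ, inv_mul_cancel₀ hσpos.ne']
  have hCu' : C *ᵥ u' = σ⁻¹ • w' := by
    rw [hu', Matrix.mulVec_smul, hw']
  have hmem : (u', r + ε) ∈ E := by
    refine ⟨⟨hu'Δ, ⟨show (0:ℝ) ≤ r + ε by linarith [hrIcc.1], hbound⟩⟩, ?_⟩
    simp only [Set.mem_iInter, Set.mem_setOf_eq]
    intro i
    rw [hCu', Matrix.mulVec_smul]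
    show (r + ε) * (σ⁻¹ * w' i) ≤ σ⁻¹ * (B *ᵥ w') i
    have := hstep i
    have hσ' : 0 ≤ σ⁻¹ := inv_nonneg.2 hσpos.le
    calc (r + ε) * (σ⁻¹ * w' i) = σ⁻¹ * ((r + ε) * w' i) := by ring
    _ ≤ σ⁻¹ * (B *ᵥ w') i := mul_le_mul_of_nonneg_left this hσ'
  have hle : r + ε ≤ r := hmax hmem
  linarith

end Part2

namespace Part3
variable {n : ℕ}

lemma irr_transpose {A : Matrix (Fin n) (Fin n) ℝ} (h : MatIrreducible A) :
    MatIrreducible Aᵀ := by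
  rintro ⟨S, hS, hSc, h0⟩
  refine h ⟨Sᶜ, hSc, by simpa using hS, fun i hi j hj => ?_⟩
  have hj' : j ∈ S := not_not.1 hj
  exact h0 j hj' i hi

/-- Full PF: eigenpair plus Collatz–Wielandt maximality. -/
lemma PF_full (hn : 0 < n) {B : Matrix (Fin n) (Fin n) ℝ} (hB : ∀ i j, 0 ≤ B i j)
    (hirr : MatIrreducible B) :
    ∃ (r : ℝ) (w : Fin n → ℝ), (∀ i, 0 < w i) ∧ B *ᵥ w = r • w ∧
      ∀ (t : ℝ) (u : Fin n → ℝ), (∀ i, 0 ≤ u i) → u ≠ 0 →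
        (∀ i, t * u i ≤ (B *ᵥ u) i) → t ≤ r := by
  haveI : NeZero n := ⟨hn.ne'⟩
  obtain ⟨r, w, hwpos, hweig⟩ := Part2.PF_exists hn hB hirr
  obtain ⟨r', wL, hwLpos, hwLeig⟩ :=
    Part2.PF_exists hn (B := Bᵀ) (fun i j => hB j i) (irr_transpose hirr)
  -- pairing identity: for any u, wL ⬝ᵥ (B *ᵥ u) = r' * (wL ⬝ᵥ u)
  have pairing : ∀ u : Fin n → ℝ, wL ⬝ᵥ (B *ᵥ u) = r' * (wL ⬝ᵥ u) := by
    intro u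
    rw [Matrix.dotProduct_mulVec, ← Matrix.mulVec_transpose, hwLeig]
    show ∑ i, (r' * wL i) * u i = r' * ∑ i, wL i * u i
    rw [Finset.mul_sum]
    exact Finset.sum_congr rfl fun i _ => by ring
  have hdotpos : 0 < wL ⬝ᵥ w :=
    Finset.sum_pos (fun i _ => mul_pos (hwLpos i) (hwpos i)) Finset.univ_nonempty
  have hrr' : r = r' := by
    have h1 : wL ⬝ᵥ (B *ᵥ w) = r * (wL ⬝ᵥ w) := by
      rw [hweig]
      show ∑ i, wL i * (r * w i) = r * ∑ i, wL i * w i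
      rw [Finset.mul_sum]
      exact Finset.sum_congr rfl fun i _ => by ring
    have h2 := pairing w
    have := h1.symm.trans h2
    exact mul_right_cancel₀ hdotpos.ne' this
  refine ⟨r, w, hwpos, hweig, fun t u hu hune hle => ?_⟩
  have hdot : 0 < wL ⬝ᵥ u := by
    obtain ⟨j, hj⟩ := Function.ne_iff.1 hune
    refine Finset.sum_pos' (fun i _ => mul_nonneg (hwLpos i).le (hu i)) ⟨j, Finset.mem_univ j, ?_⟩
    exact mul_pos (hwLpos j) (lt_of_le_of_ne (hu j) (Ne.symm hj))
  have h1 : t * (wL ⬝ᵥ u) ≤ wL ⬝ᵥ (B *ᵥ u) := by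
    show t * ∑ i, wL i * u i ≤ ∑ i, wL i * (B *ᵥ u) i
    rw [Finset.mul_sum]
    refine Finset.sum_le_sum fun i _ => ?_
    have := mul_le_mul_of_nonneg_left (hle i) (hwLpos i).le
    calc t * (wL i * u i) = wL i * (t * u i) := by ring
    _ ≤ wL i * (B *ᵥ u) i := this
  rw [pairing u, ← hrr'] at h1
  exact le_of_mul_le_mul_right h1 hdot

lemma mem_spectrum_iff_eigvec {M : Matrix (Fin n) (Fin n) ℂ} {μ : ℂ} :
    μ ∈ spectrum ℂ M ↔ ∃ x : Fin n → ℂ, x ≠ 0 ∧ M *ᵥ x = μ • x := by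
  rw [spectrum.mem_iff, Matrix.isUnit_iff_isUnit_det, isUnit_iff_ne_zero, not_not,
    ← Matrix.exists_mulVec_eq_zero_iff]
  constructor
  · rintro ⟨v, hv, hveq⟩
    refine ⟨v, hv, ?_⟩
    rw [Algebra.algebraMap_eq_smul_one, Matrix.sub_mulVec, Matrix.smul_mulVec,
      Matrix.one_mulVec] at hveq
    rw [← sub_eq_zero]
    rw [sub_eq_zero] at hveq ⊢
    exact hveq.symm
  · rintro ⟨x, hx, hxeq⟩
    refine ⟨x, hx, ?_⟩
    rw [Algebra.algebraMap_eq_smul_one, Matrix.sub_mulVec, Matrix.smul_mulVec,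
      Matrix.one_mulVec, hxeq, sub_self]

end Part3

/-- If `A` is an irreducible real `n×n` matrix with nonnegative
off-diagonal entries, then there exists a strictly positive vector `v` with
`A v = s(A) v`. -/
theorem exists_positive_eigenvector_of_spectral_bound (n : ℕ) (hn : 0 < n)
    (A : Matrix (Fin n) (Fin n) ℝ)
    (hoff : ∀ i j, i ≠ j → 0 ≤ A i j)
    (hirr : MatIrreducible A)
    (s : ℝ)
    (hs : IsGreatest {x : ℝ | ∃ μ ∈ spectrum ℂ (A.map (fun r => (r : ℂ))), x = μ.re} s) :
    ∃ v : Fin n → ℝ, (∀ i, 0 < v i) ∧ A.mulVec v = s • v := by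
  haveI : NeZero n := ⟨hn.ne'⟩
  set c : ℝ := 1 + ∑ i, |A i i| with hc
  set B : Matrix (Fin n) (Fin n) ℝ := A + c • 1 with hBdef
  have hBentry : ∀ i j, B i j = A i j + if i = j then c else 0 := by
    intro i j
    by_cases h : i = j <;> simp [hBdef, Matrix.one_apply, h]
  have hB : ∀ i j, 0 ≤ B i j := by
    intro i j
    rw [hBentry]
    by_cases h : i = j
    · simp only [h, if_true]
      have h1 : |A j j| ≤ ∑ k, |A k k| :=
        Finset.single_le_sum (fun k _ => abs_nonneg (A k k)) (Finset.mem_univ j)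
      have h2 : -|A j j| ≤ A j j := neg_abs_le _
      have hc' : c = 1 + ∑ k, |A k k| := hc
      linarith
    · simp only [h, if_false, add_zero]
      exact hoff i j h
  have hirrB : MatIrreducible B :=
    PFaux.irr_congr (fun i j hij => by rw [hBentry]; simp [hij]) hirr
  obtain ⟨r, w, hwpos, hweig, hCW⟩ := Part3.PF_full hn hB hirrB
  have hAw : A *ᵥ w = (r - c) • w := by
    have h1 : B *ᵥ w = A *ᵥ w + c • w := by
      rw [hBdef, Matrix.add_mulVec, Matrix.smul_mulVec, Matrix.one_mulVec]
    rw [h1] at hweig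
    have : A *ᵥ w = r • w - c • w := by
      rw [← hweig]; abel
    rw [this, ← sub_smul]
  -- (r - c) is in the spectrum of the complexification
  have claim1 : ((r - c : ℝ) : ℂ) ∈ spectrum ℂ (A.map (fun x => (x : ℂ))) := by
    rw [Part3.mem_spectrum_iff_eigvec]
    refine ⟨fun i => (w i : ℂ), ?_, ?_⟩
    · intro h
      have := congrFun h ⟨0, hn⟩
      simp only [Pi.zero_apply, Complex.ofReal_eq_zero] at this
      exact (hwpos ⟨0, hn⟩).ne' this
    · funext i
      have h1 : (A *ᵥ w) i = (r - c) * w i := by rw [hAw]; rfl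
      show ∑ j, (A.map (fun x => (x : ℂ))) i j * (w j : ℂ) = ((r - c : ℝ) : ℂ) * (w i : ℂ)
      have h2 : ∑ j, (A.map (fun x => (x : ℂ))) i j * (w j : ℂ)
          = ((∑ j, A i j * w j : ℝ) : ℂ) := by
        push_cast
        exact Finset.sum_congr rfl fun j _ => rfl
      rw [h2]
      have : (∑ j, A i j * w j) = (r - c) * w i := h1
      rw [this]
      push_cast
      ring
  -- upper bound : every spectral real part is ≤ r - c
  have upper : ∀ μ ∈ spectrum ℂ (A.map (fun x => (x : ℂ))), μ.re ≤ r - c := by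
    intro μ hμ
    obtain ⟨x, hxne, hxeig⟩ := Part3.mem_spectrum_iff_eigvec.1 hμ
    set u : Fin n → ℝ := fun i => ‖x i‖ with hu
    have hu0 : ∀ i, 0 ≤ u i := fun i => norm_nonneg _
    have hune : u ≠ 0 := by
      obtain ⟨j, hj⟩ := Function.ne_iff.1 hxne
      intro h
      have := congrFun h j
      simp only [hu, Pi.zero_apply] at this
      exact hj (by simpa using norm_eq_zero.1 this)
    have hxB : ∀ i, ∑ j, (B i j : ℂ) * x j = (μ + c) * x i := by
      intro i
      have hA : ∑ j, (A i j : ℂ) * x j = μ * x i := by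
        have := congrFun hxeig i
        simpa [Matrix.mulVec, dotProduct, Matrix.map_apply] using this
      have : ∑ j, (B i j : ℂ) * x j
          = ∑ j, ((A i j : ℂ) * x j + (if i = j then (c : ℂ) else 0) * x j) := by
        refine Finset.sum_congr rfl fun j _ => ?_
        rw [hBentry i j]
        push_cast
        by_cases h : i = j <;> simp [h] <;> ring
      rw [this, Finset.sum_add_distrib, hA]
      have : ∑ j, (if i = j then (c : ℂ) else 0) * x j = (c : ℂ) * x i := by
        simp [ite_mul]
      rw [this]
      ring
    have key : ∀ i, (μ.re + c) * u i ≤ (B *ᵥ u) i := by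
      intro i
      have h1 : (μ.re + c) ≤ ‖μ + c‖ := by
        have := Complex.re_le_norm (μ + (c : ℂ))
        simpa using this
      have h2 : (μ.re + c) * u i ≤ ‖μ + c‖ * u i :=
        mul_le_mul_of_nonneg_right h1 (hu0 i)
      have h3 : ‖μ + c‖ * u i = ‖∑ j, (B i j : ℂ) * x j‖ := by
        rw [hxB i, norm_mul]
      have h4 : ‖∑ j, (B i j : ℂ) * x j‖ ≤ ∑ j, B i j * u j := by
        refine (norm_sum_le _ _).trans ?_
        refine le_of_eq (Finset.sum_congr rfl fun j _ => ?_)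
        rw [norm_mul, Complex.norm_real, Real.norm_eq_abs, abs_of_nonneg (hB i j)]
      calc (μ.re + c) * u i ≤ ‖μ + c‖ * u i := h2
      _ = ‖∑ j, (B i j : ℂ) * x j‖ := h3
      _ ≤ ∑ j, B i j * u j := h4
      _ = (B *ᵥ u) i := rfl
    have := hCW (μ.re + c) u hu0 hune key
    linarith
  -- conclude s = r - c
  have hsle : s ≤ r - c := by
    obtain ⟨μ, hμ, hμre⟩ := hs.1
    rw [hμre]
    exact upper μ hμ
  have hles : r - c ≤ s := hs.2 ⟨((r - c : ℝ) : ℂ), claim1, (Complex.ofReal_re _).symm⟩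
  have hseq : s = r - c := le_antisymm hsle hles
  exact ⟨w, hwpos, by rw [hAw, hseq]⟩
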